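/- Let m ∈ ℕ, (s,p) ∈ 𝕀_m, and let 𝕏 = {x¹,…,xⁿ} be a random multiset of n points sampled independently and uniformly from 𝕄_m^d. For every k ∈ ℕ with 1 ≤ k < n/2, ℙ( #(𝕏 ∩ 𝔹_m(s,p)) ≤ k ) ≤ (2 n^k / (k−1)!) · exp( −n / 2^{m+4} ). -/

import Mathlib

open MeasureTheory Finset
open scoped Classical

noncomputable section

/-- The `k`-dispersion of a finite point set `P ⊆ [0,1]^d`: the supremum of the volumes of
axis-parallel boxes inside `[0,1]^d` containing at most `k` points of `P`. -/
def kdisp (d k : ℕ) (P : Finset (Fin d → ℝ)) : ℝ :=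
  sSup { v : ℝ | ∃ a b : Fin d → ℝ,
    (∀ i, 0 ≤ a i ∧ a i ≤ b i ∧ b i ≤ 1) ∧
    (P.filter (fun x => ∀ i, x i ∈ Set.Ioo (a i) (b i))).card ≤ k ∧
    v = ∏ i, (b i - a i) }

/-- The minimal `k`-dispersion over all `n`-point subsets of `[0,1]^d`. -/
def kdispStar (d k n : ℕ) : ℝ :=
  sInf { v : ℝ | ∃ P : Finset (Fin d → ℝ),
    (∀ x ∈ P, ∀ i, x i ∈ Set.Icc (0:ℝ) 1) ∧ P.card = n ∧ v = kdisp d k P }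

/-- The one-dimensional mesh `𝕄_m = {1/2^m, 2/2^m, …, (2^m-1)/2^m}`. -/
def Mgrid (m : ℕ) : Finset ℝ := (Finset.Icc 1 (2 ^ m - 1)).image fun j : ℕ => (j : ℝ) / 2 ^ m

/-- The mesh `𝕄_m^d`. -/
def Ggrid (m d : ℕ) : Finset (Fin d → ℝ) := Fintype.piFinset fun _ => Mgrid m

/-- `I` is a subinterval of `[0,1]`. -/
def IsIntervalIn01 (I : Set ℝ) : Prop := I ⊆ Set.Icc 0 1 ∧ I.OrdConnected

/-- Membership of the axis-parallel box `∏_ℓ I ℓ` in the family `Ω_m(s,p)`: the box has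
volume exceeding `2^{-m}`, and for every coordinate `ℓ` one has
`s ℓ / 2^m < vol(I ℓ) ≤ (s ℓ + 1)/2^m` and `inf (I ℓ) ∈ [p ℓ - 2^{-m}, p ℓ)`. -/
def memOmega (m : ℕ) {d : ℕ} (s : Fin d → ℕ) (p : Fin d → ℝ) (I : Fin d → Set ℝ) : Prop :=
  (∀ ℓ, IsIntervalIn01 (I ℓ)) ∧
  ((2:ℝ) ^ m)⁻¹ < (volume (Set.pi Set.univ I)).toReal ∧
  ∀ ℓ, (s ℓ : ℝ) / 2 ^ m < (volume (I ℓ)).toReal ∧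
    (volume (I ℓ)).toReal ≤ ((s ℓ : ℝ) + 1) / 2 ^ m ∧
    sInf (I ℓ) ∈ Set.Ico (p ℓ - ((2:ℝ) ^ m)⁻¹) (p ℓ)

/-- `(s,p)` is an admissible index pair, i.e. `(s,p) ∈ 𝕀_m`: the parameters lie in the
allowed ranges and `Ω_m(s,p) ≠ ∅`. -/
def memIm (m : ℕ) {d : ℕ} (s : Fin d → ℕ) (p : Fin d → ℝ) : Prop :=
  (∀ ℓ, s ℓ < 2 ^ m) ∧
  (∀ ℓ, ∃ j : ℕ, 1 ≤ j ∧ j ≤ 2 ^ m - 1 ∧ p ℓ = (j : ℝ) / 2 ^ m) ∧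
  ∃ I, memOmega m s p I

/-- Membership of `z` in the box `𝔹_m(s,p) = ∏_ℓ [p ℓ, p ℓ + (s ℓ - 1)/2^m]`. -/
def memBox (m : ℕ) {d : ℕ} (s : Fin d → ℕ) (p : Fin d → ℝ) (z : Fin d → ℝ) : Prop :=
  ∀ ℓ, z ℓ ∈ Set.Icc (p ℓ) (p ℓ + ((s ℓ : ℝ) - 1) / 2 ^ m)

lemma cube_le_pow (m : ℕ) : m ^ 3 ≤ 4 ^ m := by
  induction m with
  | zero => norm_num
  | succ m ih =>
    rcases Nat.lt_or_ge m 2 with h | h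
    · interval_cases m <;> norm_num
    · have h2 : 2 * (m*m) ≤ m * (m*m) := Nat.mul_le_mul_right _ h
      have h3 : 2 * m ≤ m * m := Nat.mul_le_mul_right _ h
      have : (m + 1) ^ 3 ≤ 4 * m ^ 3 := by nlinarith
      calc (m + 1) ^ 3 ≤ 4 * m ^ 3 := this
        _ ≤ 4 * 4 ^ m := by omega
        _ = 4 ^ (m + 1) := by ring

lemma five_le_pow (m : ℕ) : 5 * m ≤ 3 * 2 ^ m := by
  induction m with
  | zero => norm_num
  | succ m ih =>
    have h1 : 1 ≤ 2 ^ m := Nat.one_le_two_pow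
    have : (2:ℕ) ^ (m+1) = 2 * 2 ^ m := by ring
    omega

set_option maxHeartbeats 1000000 in
lemma star (m t : ℕ) (hm : 1 ≤ m) (h2 : 2 ≤ t) (hta : t ≤ 2 ^ m) :
    ((2:ℝ) ^ m - 1) ^ m * (t:ℝ) ^ (m + 3) ≤ ((t:ℝ) - 1) ^ m * ((2:ℝ) ^ m) ^ (m + 3) := by
  obtain ⟨a, ha⟩ : ∃ a : ℝ, a = (2:ℝ) ^ m := ⟨_, rfl⟩
  obtain ⟨T, hT⟩ : ∃ T : ℝ, T = (t:ℝ) := ⟨_, rfl⟩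
  rw [← ha, ← hT]
  have ha2 : (2:ℝ) ≤ a := by
    rw [ha]
    calc (2:ℝ) = 2 ^ 1 := (pow_one 2).symm
    _ ≤ 2 ^ m := by apply pow_le_pow_right₀ (by norm_num) hm
  have hT2 : (2:ℝ) ≤ T := by rw [hT]; exact_mod_cast h2
  have hTa : T ≤ a := by rw [ha, hT]; exact_mod_cast (show (t:ℝ) ≤ ((2^m : ℕ) : ℝ) by exact_mod_cast hta)
  have hT1 : (1:ℝ) ≤ T - 1 := by linarith
  have hT0 : (0:ℝ) < T := by linarith
  have ha0 : (0:ℝ) < a := by linarith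
  have ha1 : (0:ℝ) ≤ a - 1 := by linarith
  rw [pow_add, pow_add]
  have m1 : (a-1)^m ≤ a^m := pow_le_pow_left₀ ha1 (by linarith) m
  rcases le_or_gt (2 * t) (2 ^ m) with hcase | hcase
  · -- 2T ≤ a
    have h2Ta : 2 * T ≤ a := by
      rw [ha, hT]
      exact_mod_cast (show ((2*t:ℕ):ℝ) ≤ ((2^m : ℕ) : ℝ) by exact_mod_cast hcase)
    rcases le_or_gt t m with htm | htm
    · -- Case A : t ≤ m
      have hTm : T ≤ (m:ℝ) := by rw [hT]; exact_mod_cast htm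
      have h4m : ((4:ℝ))^m = a^2 := by
        rw [ha, show (4:ℝ) = 2^2 by norm_num, ← pow_mul, ← pow_mul, Nat.mul_comm]
      have hcube : T ^ 3 ≤ a ^ 2 := by
        calc T ^ 3 ≤ (m:ℝ) ^ 3 := pow_le_pow_left₀ hT0.le hTm 3
        _ ≤ (4:ℝ) ^ m := by exact_mod_cast cube_le_pow m
        _ = a ^ 2 := h4m
      have hTm' : T ^ m ≤ a * (T-1)^m := by
        calc T ^ m ≤ (2*(T-1)) ^ m := pow_le_pow_left₀ hT0.le (by linarith) m
        _ = 2^m * (T-1)^m := by rw [mul_pow]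
        _ = a * (T-1)^m := by rw [ha]
      have m2 : T^m * T^3 ≤ (a*(T-1)^m) * a^2 :=
        mul_le_mul hTm' hcube (by positivity) (mul_nonneg ha0.le (pow_nonneg (by linarith) m))
      calc (a-1)^m * (T^m * T^3) ≤ a^m * ((a*(T-1)^m) * a^2) :=
            mul_le_mul m1 m2 (by positivity) (by positivity)
      _ = (T-1)^m * (a^m * a^3) := by ring
    · -- Case B : m < t
      have hmT : (m:ℝ) ≤ T - 1 := by
        have : (m:ℝ) + 1 ≤ T := by rw [hT]; exact_mod_cast htm
        linarith
      have hT1' : (0:ℝ) < T - 1 := by linarith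
      have hexp1 : T ≤ (T-1) * Real.exp (1/(T-1)) := by
        have h := Real.add_one_le_exp (1/(T-1))
        calc T = (T-1) * (1/(T-1) + 1) := by field_simp; ring
        _ ≤ (T-1) * Real.exp (1/(T-1)) := mul_le_mul_of_nonneg_left h hT1'.le
      have hTpow : T^m ≤ (T-1)^m * 8 := by
        have e1 : T^m ≤ ((T-1) * Real.exp (1/(T-1)))^m :=
          pow_le_pow_left₀ hT0.le hexp1 m
        have e2 : ((T-1) * Real.exp (1/(T-1)))^m = (T-1)^m * Real.exp ((m:ℝ) * (1/(T-1))) := by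
          rw [mul_pow, Real.exp_nat_mul]
        have e3 : (m:ℝ) * (1/(T-1)) ≤ 1 := by
          rw [mul_one_div, div_le_one hT1']; exact hmT
        have e4 : Real.exp ((m:ℝ) * (1/(T-1))) ≤ 8 := by
          calc Real.exp ((m:ℝ) * (1/(T-1))) ≤ Real.exp 1 := Real.exp_le_exp.2 e3
          _ ≤ 8 := by linarith [Real.exp_one_lt_d9]
        calc T^m ≤ (T-1)^m * Real.exp ((m:ℝ) * (1/(T-1))) := by rw [← e2]; exact e1
        _ ≤ (T-1)^m * 8 := mul_le_mul_of_nonneg_left e4 (pow_nonneg hT1'.le m)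
      have hcube : 8 * T^3 ≤ a^3 := by
        calc 8 * T^3 = (2*T)^3 := by ring
        _ ≤ a^3 := pow_le_pow_left₀ (by linarith) h2Ta 3
      have m2 : T^m * T^3 ≤ ((T-1)^m * 8) * T^3 :=
        mul_le_mul_of_nonneg_right hTpow (by positivity)
      calc (a-1)^m * (T^m * T^3) ≤ a^m * (((T-1)^m * 8) * T^3) :=
            mul_le_mul m1 m2 (by positivity) (by positivity)
      _ = ((T-1)^m * a^m) * (8 * T^3) := by ring
      _ ≤ ((T-1)^m * a^m) * a^3 :=
            mul_le_mul_of_nonneg_left hcube (mul_nonneg (pow_nonneg hT1'.le m) (by positivity))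
      _ = (T-1)^m * (a^m * a^3) := by ring
  · -- Case C : a < 2T
    have hhalfn : 2^(m-1) + 1 ≤ t := by
      have h1 : 2^m = 2 * 2^(m-1) := by
        rw [← pow_succ']
        congr 1
        omega
      omega
    have hhalf : a/2 ≤ T - 1 := by
      have h1 : ((2:ℝ))^(m-1) + 1 ≤ T := by
        rw [hT]
        exact_mod_cast (show ((2^(m-1) + 1 : ℕ):ℝ) ≤ ((t:ℕ):ℝ) by exact_mod_cast hhalfn)
      have h2 : a = 2 * 2^(m-1) := by
        rw [ha, ← pow_succ']
        congr 1
        omega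
      linarith
    obtain ⟨u, hu_def⟩ : ∃ u : ℝ, u = (a - T)/a := ⟨_, rfl⟩
    obtain ⟨r, hr_def⟩ : ∃ r : ℝ, r = (a - T)/(a*(T-1)) := ⟨_, rfl⟩
    have hT1' : (0:ℝ) < T - 1 := by linarith
    have hden : (0:ℝ) < a * (T-1) := mul_pos ha0 hT1'
    have hu0 : 0 ≤ u := hu_def ▸ div_nonneg (by linarith) ha0.le
    have huh : u ≤ 1/2 := by
      rw [hu_def, div_le_iff₀ ha0]
      linarith
    have hr0 : 0 ≤ r := hr_def ▸ div_nonneg (by linarith) hden.le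
    have hfive : 5*(m:ℝ) ≤ 3*a := by
      rw [ha]
      exact_mod_cast (show ((5*m:ℕ):ℝ) ≤ ((3*2^m:ℕ):ℝ) by exact_mod_cast five_le_pow m)
    have hrm : (m:ℝ) * r ≤ 6/5 * u := by
      have key : (m:ℝ)*(a-T)*a ≤ (6/5*(a-T))*(a*(T-1)) := by
        nlinarith [mul_nonneg (mul_nonneg ha0.le (sub_nonneg.2 hTa))
          (show (0:ℝ) ≤ 6/5*(T-1) - m by nlinarith)]
      have e1 : (m:ℝ) * r = (m*(a-T))/(a*(T-1)) := by rw [hr_def]; ring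
      have e2 : 6/5 * u = (6/5*(a-T))/a := by rw [hu_def]; ring
      rw [e1, e2, div_le_div_iff₀ hden ha0]
      nlinarith [key]
    have hrm1 : (m:ℝ) * r ≤ 3/5 := by nlinarith
    have hpow : (1+r)^m ≤ Real.exp ((m:ℝ)*r) := by
      calc (1+r)^m ≤ (Real.exp r)^m :=
            pow_le_pow_left₀ (by linarith) (by linarith [Real.add_one_le_exp r]) m
      _ = Real.exp ((m:ℝ)*r) := (Real.exp_nat_mul r m).symm
    have hexp_le : Real.exp ((m:ℝ)*r) ≤ 1 + 3*u := by
      have h2 : 1 - (m:ℝ)*r ≤ Real.exp (-((m:ℝ)*r)) := by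
        have := Real.add_one_le_exp (-((m:ℝ)*r)); linarith
      have h3 : (0:ℝ) < 1 - (m:ℝ)*r := by linarith
      have h4 : Real.exp ((m:ℝ)*r) * (1 - (m:ℝ)*r) ≤ 1 := by
        calc Real.exp ((m:ℝ)*r) * (1-(m:ℝ)*r)
            ≤ Real.exp ((m:ℝ)*r) * Real.exp (-((m:ℝ)*r)) :=
              mul_le_mul_of_nonneg_left h2 (Real.exp_pos _).le
        _ = 1 := by rw [← Real.exp_add]; simp
      have hx : (m:ℝ)*r*(1+3*u) ≤ 6/5*u*(1+3*u) :=
        mul_le_mul_of_nonneg_right hrm (by linarith)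
      have hy : 6/5*u*(1+3*u) ≤ 3*u := by
        have hu2 : u*u ≤ u*(1/2) := mul_le_mul_of_nonneg_left huh hu0
        linarith [hu2]
      have h5 : 1 ≤ (1+3*u)*(1-(m:ℝ)*r) := by linarith [hx, hy]
      have h6 : Real.exp ((m:ℝ)*r) ≤ 1/(1-(m:ℝ)*r) := by
        rw [le_div_iff₀ h3]; exact h4
      have h7 : 1/(1-(m:ℝ)*r) ≤ 1+3*u := by
        rw [div_le_iff₀ h3]; linarith
      linarith
    have hcube : (1 + 3*u) * T^3 ≤ a^3 := by
      have hTu : T = a*(1-u) := by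
        rw [hu_def]
        field_simp
        ring
      have hq : (1+3*u)*(1-u)^3 ≤ 1 := by nlinarith [sq_nonneg u, sq_nonneg (1-u)]
      calc (1+3*u) * T^3 = ((1+3*u)*(1-u)^3)*a^3 := by rw [hTu]; ring
      _ ≤ 1*a^3 := mul_le_mul_of_nonneg_right hq (by positivity)
      _ = a^3 := one_mul _
    have hfact : (a-1)*T = (a*(T-1))*(1+r) := by
      rw [hr_def]
      field_simp
      ring
    have hr1 : (0:ℝ) ≤ 1 + r := by linarith
    calc (a-1)^m*(T^m*T^3) = ((a-1)*T)^m * T^3 := by rw [mul_pow]; ring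
    _ = (a*(T-1))^m * ((1+r)^m * T^3) := by rw [hfact, mul_pow, mul_pow]; ring
    _ ≤ (a*(T-1))^m * ((1+3*u) * T^3) := by
        refine mul_le_mul_of_nonneg_left ?_ (pow_nonneg hden.le m)
        exact mul_le_mul_of_nonneg_right (hpow.trans hexp_le) (by positivity)
    _ ≤ (a*(T-1))^m * a^3 := mul_le_mul_of_nonneg_left hcube (pow_nonneg hden.le m)
    _ = (T-1)^m*(a^m*a^3) := by rw [mul_pow]; ring

lemma key (m d : ℕ) (hm : 1 ≤ m) (hd : 1 ≤ d) (s : Fin d → ℕ)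
    (hs1 : ∀ ℓ, 1 ≤ s ℓ) (hs2 : ∀ ℓ, s ℓ < 2 ^ m)
    (hP : (2:ℝ) ^ (m * d) < 2 ^ m * ∏ ℓ, ((s ℓ : ℝ) + 1)) :
    ((2:ℝ) ^ m - 1) ^ d ≤ 2 ^ (m + 3) * ∏ ℓ, (s ℓ : ℝ) := by
  have hB1 : (1:ℝ) ≤ (2:ℝ) ^ m - 1 := by
    have : (2:ℝ) ≤ 2 ^ m := by
      calc (2:ℝ) = 2 ^ 1 := (pow_one 2).symm
      _ ≤ 2 ^ m := by apply pow_le_pow_right₀ (by norm_num) hm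
    linarith
  have hstar : ∀ ℓ : Fin d,
      ((2:ℝ) ^ m - 1) ^ m * ((s ℓ : ℝ) + 1) ^ (m + 3) ≤ (s ℓ : ℝ) ^ m * ((2:ℝ) ^ m) ^ (m + 3) := by
    intro ℓ
    have h := star m (s ℓ + 1) hm (by have := hs1 ℓ; omega) (by have := hs2 ℓ; omega)
    have c1 : ((s ℓ + 1 : ℕ) : ℝ) = (s ℓ : ℝ) + 1 := by push_cast; ring
    rw [c1] at h
    simpa using h
  have hprod : ∀ ℓ : Fin d, (0:ℝ) ≤ ((2:ℝ) ^ m - 1) ^ m * ((s ℓ : ℝ) + 1) ^ (m + 3) := by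
    intro ℓ; positivity
  have G1 : ∏ ℓ, (((2:ℝ) ^ m - 1) ^ m * ((s ℓ : ℝ) + 1) ^ (m + 3)) ≤
      ∏ ℓ, ((s ℓ : ℝ) ^ m * ((2:ℝ) ^ m) ^ (m + 3)) :=
    Finset.prod_le_prod (fun ℓ _ => hprod ℓ) (fun ℓ _ => hstar ℓ)
  rw [Finset.prod_mul_distrib, Finset.prod_mul_distrib, Finset.prod_const, Finset.prod_const,
    Finset.prod_pow, Finset.prod_pow] at G1
  simp only [Finset.card_univ, Fintype.card_fin] at G1
  -- G1 : ((2^m-1)^m)^d * ∏(s+1)^(m+3) ≤ (∏ s)^m * ((2^m)^(m+3))^d -- check shapes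
  set S : ℝ := ∏ ℓ, (s ℓ : ℝ) with hS
  set P : ℝ := ∏ ℓ, ((s ℓ : ℝ) + 1) with hPdef
  have hA0 : (0:ℝ) < (2:ℝ) ^ m := by positivity
  have hPpos : (0:ℝ) < P := by
    rw [hPdef]; apply Finset.prod_pos; intro ℓ _; positivity
  have hAd : ((2:ℝ) ^ m) ^ (d - 1) ≤ P := by
    have h1 : ((2:ℝ) ^ m) ^ d < 2 ^ m * P := by
      rw [← pow_mul]; exact hP
    have h2 : ((2:ℝ)^m)^d = 2^m * ((2:ℝ)^m)^(d-1) := by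
      rw [← pow_succ']
      congr 1
      omega
    nlinarith [hA0]
  have G2 : (((2:ℝ) ^ m - 1) ^ d) ^ m * (((2:ℝ) ^ m) ^ (d - 1)) ^ (m + 3) ≤
      S ^ m * (((2:ℝ) ^ m) ^ (m + 3)) ^ d := by
    calc (((2:ℝ) ^ m - 1) ^ d) ^ m * (((2:ℝ) ^ m) ^ (d - 1)) ^ (m + 3)
        ≤ (((2:ℝ) ^ m - 1) ^ d) ^ m * P ^ (m + 3) := by
          apply mul_le_mul_of_nonneg_left _ (by positivity)
          exact pow_le_pow_left₀ (by positivity) hAd (m + 3)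
    _ = (((2:ℝ) ^ m - 1) ^ m) ^ d * P ^ (m + 3) := by rw [← pow_mul, ← pow_mul, Nat.mul_comm]
    _ ≤ S ^ m * (((2:ℝ) ^ m) ^ (m + 3)) ^ d := G1
  have hexp : (m + 3) * d = (d - 1) * (m + 3) + (m + 3) := by
    have : d - 1 + 1 = d := by omega
    calc (m+3) * d = (m+3) * ((d-1) + 1) := by rw [this]
    _ = (d-1)*(m+3) + (m+3) := by ring
  have G3 : (((2:ℝ) ^ m - 1) ^ d) ^ m ≤ S ^ m * ((2:ℝ) ^ m) ^ (m + 3) := by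
    have e1 : (((2:ℝ) ^ m) ^ (m + 3)) ^ d =
        (((2:ℝ) ^ m) ^ (d - 1)) ^ (m + 3) * ((2:ℝ) ^ m) ^ (m + 3) := by
      simp only [← pow_mul, ← pow_add]
      congr 1
      calc m*(m+3)*d = m*((m+3)*d) := by ring
      _ = m*((d-1)*(m+3)+(m+3)) := by rw [hexp]
      _ = m*(d-1)*(m+3) + m*(m+3) := by ring
    have hCpos : (0:ℝ) < (((2:ℝ) ^ m) ^ (d - 1)) ^ (m + 3) := by positivity
    apply le_of_mul_le_mul_right _ hCpos
    calc (((2:ℝ) ^ m - 1) ^ d) ^ m * (((2:ℝ) ^ m) ^ (d - 1)) ^ (m + 3)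
        ≤ S ^ m * (((2:ℝ) ^ m) ^ (m + 3)) ^ d := G2
    _ = S ^ m * ((2:ℝ) ^ m) ^ (m + 3) * (((2:ℝ) ^ m) ^ (d - 1)) ^ (m + 3) := by
        rw [e1]; ring
  have hS0 : (0:ℝ) ≤ S := by
    rw [hS]; exact Finset.prod_nonneg (fun ℓ _ => by positivity)
  have G4 : (((2:ℝ) ^ m - 1) ^ d) ^ m ≤ ((2:ℝ) ^ (m + 3) * S) ^ m := by
    calc (((2:ℝ) ^ m - 1) ^ d) ^ m ≤ S ^ m * ((2:ℝ) ^ m) ^ (m + 3) := G3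
    _ = ((2:ℝ) ^ (m + 3) * S) ^ m := by
        rw [mul_pow, ← pow_mul, ← pow_mul, Nat.mul_comm m (m+3)]
        ring
  exact le_of_pow_le_pow_left₀ (by omega) (by positivity) G4

lemma gridmap_inj (m : ℕ) : Function.Injective (fun j : ℕ => (j : ℝ) / 2 ^ m) := by
  intro x y h
  field_simp at h
  exact_mod_cast h

lemma Mgrid_card (m : ℕ) : (Mgrid m).card = 2 ^ m - 1 := by
  rw [Mgrid, Finset.card_image_of_injective _ (gridmap_inj m), Nat.card_Icc]
  omega

lemma filter_piFinset_forall {d : ℕ} {α : Type*} [DecidableEq α] (t : Fin d → Finset α)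
    (Q : Fin d → α → Prop) :
    (Fintype.piFinset t).filter (fun x => ∀ i, Q i (x i)) =
      Fintype.piFinset (fun i => (t i).filter (fun y => Q i y)) := by
  ext x
  simp only [Finset.mem_filter, Fintype.mem_piFinset, ← forall_and]

lemma coord_count (m j s' : ℕ) (hj : 1 ≤ j) (hs : 1 ≤ s') (hjs : j + s' ≤ 2 ^ m) :
    ((Mgrid m).filter (fun y => y ∈ Set.Icc ((j:ℝ)/2^m) ((j:ℝ)/2^m + ((s':ℝ)-1)/2^m))).card = s' := by
  obtain ⟨c, rfl⟩ : ∃ c, s' = c + 1 := ⟨s' - 1, by omega⟩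
  have h2m : (0:ℝ) < (2:ℝ) ^ m := by positivity
  rw [Mgrid, Finset.filter_image]
  rw [Finset.card_image_of_injective _ (gridmap_inj m)]
  have : ((Finset.Icc 1 (2^m - 1)).filter
      (fun i : ℕ => (fun j : ℕ => (j : ℝ) / 2 ^ m) i ∈
        Set.Icc ((j:ℝ)/2^m) ((j:ℝ)/2^m + (((c+1:ℕ):ℝ)-1)/2^m))) = Finset.Icc j (j + c) := by
    ext i
    simp only [Finset.mem_filter, Finset.mem_Icc, Set.mem_Icc]
    have e1 : ((j:ℝ)/2^m ≤ (i:ℝ)/2^m) ↔ (j ≤ i) := by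
      rw [div_le_div_iff_of_pos_right h2m]
      exact_mod_cast Nat.cast_le
    have e2 : ((i:ℝ)/2^m ≤ (j:ℝ)/2^m + (((c+1:ℕ):ℝ)-1)/2^m) ↔ (i ≤ j + c) := by
      rw [← add_div, div_le_div_iff_of_pos_right h2m]
      constructor
      · intro h
        have : (i:ℝ) ≤ ((j + c : ℕ) : ℝ) := by push_cast at h ⊢; linarith
        exact_mod_cast this
      · intro h
        have : (i:ℝ) ≤ ((j + c : ℕ) : ℝ) := by exact_mod_cast h
        push_cast at this ⊢; linarith
    rw [e1, e2]
    omega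
  rw [this, Nat.card_Icc]
  omega

lemma count_T {n : ℕ} {α : Type*} [DecidableEq α] (G : Finset α) (R : α → Prop)
    (T : Finset (Fin n)) :
    ((Fintype.piFinset fun _ : Fin n => G).filter (fun ω => ∀ i ∈ T, ¬ R (ω i))).card
      = (G.filter (fun g => ¬ R g)).card ^ T.card * G.card ^ (n - T.card) := by
  set Bf := G.filter (fun g => ¬ R g) with hBf
  have e : (Fintype.piFinset fun _ : Fin n => G).filter (fun ω => ∀ i ∈ T, ¬ R (ω i))
      = Fintype.piFinset (fun i => if i ∈ T then Bf else G) := by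
    ext ω
    simp only [Finset.mem_filter, Fintype.mem_piFinset]
    constructor
    · rintro ⟨h1, h2⟩ i
      by_cases hi : i ∈ T
      · simp only [if_pos hi, hBf, Finset.mem_filter]
        exact ⟨h1 i, h2 i hi⟩
      · simp only [if_neg hi]
        exact h1 i
    · intro h
      constructor
      · intro i
        by_cases hi : i ∈ T
        · have := h i; rw [if_pos hi, hBf, Finset.mem_filter] at this; exact this.1
        · have := h i; rwa [if_neg hi] at this
      · intro i hi
        have := h i; rw [if_pos hi, hBf, Finset.mem_filter] at this; exact this.2
  rw [e, Fintype.card_piFinset]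
  rw [← Finset.prod_filter_mul_prod_filter_not Finset.univ (· ∈ T)]
  have hT1 : Finset.univ.filter (fun i => i ∈ T) = T := by ext i; simp
  have hc1 : ∏ i ∈ Finset.univ.filter (fun i => i ∈ T), (if i ∈ T then Bf else G).card
      = Bf.card ^ T.card := by
    rw [hT1]
    rw [Finset.prod_congr rfl (fun i hi => by rw [if_pos hi])]
    exact Finset.prod_const _
  have hc2 : ∏ i ∈ Finset.univ.filter (fun i => ¬ i ∈ T), (if i ∈ T then Bf else G).card
      = G.card ^ (n - T.card) := by
    rw [Finset.prod_congr rfl (fun i hi => by rw [if_neg (Finset.mem_filter.1 hi).2])]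
    rw [Finset.prod_const]
    congr 1
    have := Finset.card_filter_add_card_filter_not (s := (Finset.univ : Finset (Fin n)))
      (p := (fun i => i ∈ T))
    rw [hT1] at this
    simp only [Finset.card_univ, Fintype.card_fin] at this
    omega
  rw [hc1, hc2]

set_option maxHeartbeats 2000000 in
/-- For `(s,p) ∈ 𝕀_m` and a random multiset `𝕏 = {x¹,…,xⁿ}` of `n` points sampled
independently and uniformly from `𝕄_m^d`, for every `k ∈ ℕ` with `1 ≤ k < n/2`,
`ℙ(#(𝕏 ∩ 𝔹_m(s,p)) ≤ k) ≤ (2 n^k/(k-1)!) · exp(-n/2^{m+4})`. -/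
theorem statement_6 (m d n k : ℕ) (hm : 1 ≤ m) (hd : 1 ≤ d) (hk : 1 ≤ k) (hkn : 2 * k < n)
    (s : Fin d → ℕ) (p : Fin d → ℝ) (hsp : memIm m s p) :
    (((Fintype.piFinset fun _ : Fin n => Ggrid m d).filter fun ω =>
        (Finset.univ.filter fun i : Fin n => memBox m s p (ω i)).card ≤ k).card : ℝ) /
      ((Fintype.piFinset fun _ : Fin n => Ggrid m d).card : ℝ)
    ≤ 2 * (n : ℝ) ^ k / (Nat.factorial (k - 1)) * Real.exp (-(n : ℝ) / 2 ^ (m + 4)) := by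
  obtain ⟨hslt, hpj, I, hIint, hvol, hIc⟩ := hsp
  choose j hj1 hj2 hjp using hpj
  have h2m : (0:ℝ) < 2 ^ m := by positivity
  -- volume facts
  set v : Fin d → ℝ := fun ℓ => (volume (I ℓ)).toReal with hv
  have hv0 : ∀ ℓ, 0 ≤ v ℓ := fun ℓ => ENNReal.toReal_nonneg
  have hv1 : ∀ ℓ, v ℓ ≤ 1 := by
    intro ℓ
    have h1 : volume (I ℓ) ≤ volume (Set.Icc (0:ℝ) 1) := measure_mono (hIint ℓ).1
    rw [Real.volume_Icc] at h1
    have h2 := ENNReal.toReal_mono (by simp) h1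
    simpa using h2
  have hprodv : (volume (Set.pi Set.univ I)).toReal = ∏ ℓ, v ℓ := by
    rw [volume_pi_pi, ENNReal.toReal_prod]
  have hvtot : ((2:ℝ)^m)⁻¹ < ∏ ℓ, v ℓ := by rw [← hprodv]; exact hvol
  have hvs : ∀ ℓ, (s ℓ:ℝ)/2^m < v ℓ := fun ℓ => (hIc ℓ).1
  have hvs2 : ∀ ℓ, v ℓ ≤ ((s ℓ:ℝ)+1)/2^m := fun ℓ => (hIc ℓ).2.1
  -- s ℓ ≥ 1
  have hs1 : ∀ ℓ, 1 ≤ s ℓ := by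
    intro ℓ
    have hple : ∏ ℓ', v ℓ' ≤ v ℓ := by
      calc ∏ ℓ', v ℓ' = v ℓ * ∏ ℓ' ∈ univ.erase ℓ, v ℓ' :=
            (Finset.mul_prod_erase univ v (mem_univ ℓ)).symm
      _ ≤ v ℓ * 1 := mul_le_mul_of_nonneg_left
            (Finset.prod_le_one (fun i _ => hv0 i) (fun i _ => hv1 i)) (hv0 ℓ)
      _ = v ℓ := mul_one _
    have h1 : ((2:ℝ)^m)⁻¹ < ((s ℓ:ℝ)+1)/2^m := lt_of_lt_of_le (lt_of_lt_of_le hvtot hple) (hvs2 ℓ)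
    rw [inv_eq_one_div, div_lt_div_iff_of_pos_right h2m] at h1
    have h2 : (0:ℝ) < (s ℓ:ℝ) := by linarith
    have h3 : 0 < s ℓ := by exact_mod_cast h2
    omega
  -- j ℓ + s ℓ ≤ 2^m
  have hjs : ∀ ℓ, j ℓ + s ℓ ≤ 2^m := by
    intro ℓ
    have hbdd : BddBelow (I ℓ) := BddBelow.mono (hIint ℓ).1 bddBelow_Icc
    have hsub : I ℓ ⊆ Set.Icc (sInf (I ℓ)) 1 :=
      fun x hx => ⟨csInf_le hbdd hx, ((hIint ℓ).1 hx).2⟩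
    have hInf_lt : sInf (I ℓ) < p ℓ := (hIc ℓ).2.2.2
    have hInf_ge : p ℓ - ((2:ℝ)^m)⁻¹ ≤ sInf (I ℓ) := (hIc ℓ).2.2.1
    have hp1 : p ℓ ≤ 1 := by
      rw [hjp ℓ, div_le_one h2m]
      have h1 : ((j ℓ : ℕ):ℝ) ≤ ((2^m - 1 : ℕ):ℝ) := by exact_mod_cast hj2 ℓ
      have h2 : ((2^m - 1 : ℕ):ℝ) ≤ (2:ℝ)^m := by
        have h3 : ((2^m - 1:ℕ):ℝ) ≤ ((2^m : ℕ):ℝ) := by exact_mod_cast Nat.sub_le _ _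
        calc ((2^m - 1:ℕ):ℝ) ≤ ((2^m : ℕ):ℝ) := h3
        _ = (2:ℝ)^m := by push_cast; ring
      linarith
    have hvle : v ℓ ≤ 1 - sInf (I ℓ) := by
      have h1 : volume (I ℓ) ≤ volume (Set.Icc (sInf (I ℓ)) 1) := measure_mono hsub
      rw [Real.volume_Icc] at h1
      have h2 := ENNReal.toReal_mono (by simp) h1
      rw [ENNReal.toReal_ofReal (by linarith : (0:ℝ) ≤ 1 - sInf (I ℓ))] at h2
      exact h2
    have hkey : (s ℓ:ℝ)/2^m < 1 - ((j ℓ:ℝ)/2^m - ((2:ℝ)^m)⁻¹) := by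
      have h0 := hvs ℓ
      have h1 : (s ℓ:ℝ)/2^m < 1 - sInf (I ℓ) := lt_of_lt_of_le h0 hvle
      have h2 : p ℓ - ((2:ℝ)^m)⁻¹ ≤ sInf (I ℓ) := hInf_ge
      rw [hjp ℓ] at h2
      linarith
    have hmul : (s ℓ:ℝ) + (j ℓ:ℝ) < 2^m + 1 := by
      have h2 := mul_lt_mul_of_pos_right hkey h2m
      rw [div_mul_cancel₀ _ (ne_of_gt h2m)] at h2
      have h3 : (1 - ((j ℓ:ℝ)/2^m - ((2:ℝ)^m)⁻¹)) * 2^m = 2^m - (j ℓ:ℝ) + 1 := by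
        field_simp
        ring
      rw [h3] at h2
      linarith
    have hcast : ((j ℓ + s ℓ:ℕ):ℝ) < ((2^m + 1:ℕ):ℝ) := by push_cast; linarith
    have := (Nat.cast_lt (α := ℝ)).1 hcast
    omega
  -- product lower bound
  have hP : (2:ℝ)^(m*d) < 2^m * ∏ ℓ, ((s ℓ:ℝ)+1) := by
    have h1 : ∏ ℓ, v ℓ ≤ ∏ ℓ, (((s ℓ:ℝ)+1)/2^m) :=
      Finset.prod_le_prod (fun ℓ _ => hv0 ℓ) (fun ℓ _ => hvs2 ℓ)
    have h2 : ∏ ℓ, (((s ℓ:ℝ)+1)/2^m) = (∏ ℓ, ((s ℓ:ℝ)+1))/2^(m*d) := by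
      rw [Finset.prod_div_distrib, Finset.prod_const, card_univ, Fintype.card_fin, ← pow_mul]
    have h3 : ((2:ℝ)^m)⁻¹ < (∏ ℓ, ((s ℓ:ℝ)+1))/2^(m*d) := by
      rw [← h2]; exact lt_of_lt_of_le hvtot h1
    rw [inv_eq_one_div, div_lt_div_iff₀ h2m (by positivity)] at h3
    linarith
  -- key probability bound
  have hkeyP : ((2:ℝ)^m - 1)^d ≤ 2^(m+3) * ∏ ℓ, (s ℓ:ℝ) := key m d hm hd s hs1 hslt hP
  -- cardinalities
  have hGcard : (Ggrid m d).card = (2^m - 1)^d := by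
    rw [Ggrid, Fintype.card_piFinset]
    simp [Mgrid_card]
  have hTotcard : (Fintype.piFinset fun _ : Fin n => Ggrid m d).card = ((2^m-1)^d)^n := by
    rw [Fintype.card_piFinset]
    simp [hGcard]
  have hAcard : ((Ggrid m d).filter (fun g => memBox m s p g)).card = ∏ ℓ, s ℓ := by
    have e : (Ggrid m d).filter (fun g => memBox m s p g)
        = Fintype.piFinset (fun ℓ => (Mgrid m).filter
            (fun y => y ∈ Set.Icc (p ℓ) (p ℓ + ((s ℓ:ℝ)-1)/2^m))) := by
      rw [Ggrid]
      ext x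
      rw [Finset.mem_filter]
      simp only [Finset.mem_filter, Fintype.mem_piFinset, memBox, ← forall_and]
    rw [e, Fintype.card_piFinset]
    apply Finset.prod_congr rfl
    intro ℓ _
    rw [hjp ℓ]
    exact coord_count m (j ℓ) (s ℓ) (hj1 ℓ) (hs1 ℓ) (hjs ℓ)
  have hBcard : ((Ggrid m d).filter (fun g => ¬ memBox m s p g)).card
      = (2^m-1)^d - ∏ ℓ, s ℓ := by
    have := Finset.card_filter_add_card_filter_not
      (s := Ggrid m d) (p := fun g => memBox m s p g)
    omega
  -- union bound
  set Tot := Fintype.piFinset fun _ : Fin n => Ggrid m d with hTotDef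
  set Bad := Tot.filter (fun ω => (univ.filter fun i : Fin n => memBox m s p (ω i)).card ≤ k)
    with hBadDef
  have hsubset : Bad ⊆ (Finset.univ.powersetCard (n - k)).biUnion
      (fun T => Tot.filter (fun ω => ∀ i ∈ T, ¬ memBox m s p (ω i))) := by
    intro ω hω
    rw [hBadDef, Finset.mem_filter] at hω
    obtain ⟨hω1, hω2⟩ := hω
    have hF : n - k ≤ (univ.filter (fun i => ¬ memBox m s p (ω i))).card := by
      have := Finset.card_filter_add_card_filter_not
        (s := (univ : Finset (Fin n))) (p := fun i => memBox m s p (ω i))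
      simp only [card_univ, Fintype.card_fin] at this
      omega
    obtain ⟨T, hTsub, hTcard⟩ := Finset.exists_subset_card_eq hF
    rw [Finset.mem_biUnion]
    refine ⟨T, ?_, ?_⟩
    · rw [Finset.mem_powersetCard_univ]
      exact hTcard
    · rw [Finset.mem_filter]
      exact ⟨hω1, fun i hi => (Finset.mem_filter.1 (hTsub hi)).2⟩
  have hBadcard : Bad.card ≤
      n.choose (n-k) * (((2^m-1)^d - ∏ ℓ, s ℓ) ^ (n-k) * ((2^m-1)^d) ^ (n - (n-k))) := by
    calc Bad.card ≤ ((Finset.univ.powersetCard (n - k)).biUnion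
        (fun T => Tot.filter (fun ω => ∀ i ∈ T, ¬ memBox m s p (ω i)))).card :=
          Finset.card_le_card hsubset
    _ ≤ ∑ T ∈ Finset.univ.powersetCard (n - k),
          (Tot.filter (fun ω => ∀ i ∈ T, ¬ memBox m s p (ω i))).card :=
          Finset.card_biUnion_le
    _ = ∑ T ∈ Finset.univ.powersetCard (n - k),
          (((2^m-1)^d - ∏ ℓ, s ℓ) ^ (n-k) * ((2^m-1)^d) ^ (n - (n-k))) := by
          apply Finset.sum_congr rfl
          intro T hT
          rw [hTotDef, count_T (Ggrid m d) (memBox m s p) T, hBcard, hGcard,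
            Finset.mem_powersetCard_univ.1 hT]
    _ = (Finset.univ.powersetCard (n - k)).card *
          (((2^m-1)^d - ∏ ℓ, s ℓ) ^ (n-k) * ((2^m-1)^d) ^ (n - (n-k))) := by
          rw [Finset.sum_const, smul_eq_mul]
    _ = n.choose (n-k) * (((2^m-1)^d - ∏ ℓ, s ℓ) ^ (n-k) * ((2^m-1)^d) ^ (n - (n-k))) := by
          rw [Finset.card_powersetCard, card_univ, Fintype.card_fin]
  -- final arithmetic
  have h2pow : (2:ℕ) ≤ 2^m := by
    calc (2:ℕ) = 2^1 := rfl
    _ ≤ 2^m := Nat.pow_le_pow_right (by norm_num) hm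
  have haN_le : (∏ ℓ, s ℓ) ≤ (2^m-1)^d := by
    calc (∏ ℓ, s ℓ) ≤ ∏ _ℓ : Fin d, (2^m - 1) :=
          Finset.prod_le_prod' (fun ℓ _ => by have := hslt ℓ; omega)
    _ = (2^m-1)^d := by rw [Finset.prod_const, card_univ, Fintype.card_fin]
  have haN_pos : 0 < ∏ ℓ, s ℓ := Finset.prod_pos (fun ℓ _ => hs1 ℓ)
  have hNd_pos : 0 < (2^m-1)^d := Nat.pow_pos (by omega)
  have hkn' : k ≤ n := by omega
  have hNdR : (((2^m-1)^d : ℕ):ℝ) = ((2:ℝ)^m - 1)^d := by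
    have h1 : ((2^m - 1 : ℕ):ℝ) = (2:ℝ)^m - 1 := by
      rw [Nat.cast_sub (by omega)]
      push_cast
      ring
    rw [Nat.cast_pow, h1]
  have haNR : ((∏ ℓ, s ℓ : ℕ):ℝ) = ∏ ℓ, (s ℓ:ℝ) := by push_cast; rfl
  have hNdR_pos : (0:ℝ) < (((2^m-1)^d : ℕ):ℝ) := by exact_mod_cast hNd_pos
  set q : ℝ := ((∏ ℓ, s ℓ : ℕ):ℝ) / (((2^m-1)^d : ℕ):ℝ) with hqdef
  have hq1 : (1:ℝ)/2^(m+3) ≤ q := by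
    rw [hqdef, div_le_div_iff₀ (by positivity) hNdR_pos]
    rw [hNdR, haNR]
    linarith [hkeyP]
  have hq2 : q ≤ 1 := by
    rw [hqdef, div_le_one hNdR_pos]
    exact_mod_cast haN_le
  have hq0 : 0 < q := by
    rw [hqdef]
    apply div_pos _ hNdR_pos
    exact_mod_cast haN_pos
  -- bound the probability
  have hcast_sub : (((2^m-1)^d - ∏ ℓ, s ℓ : ℕ):ℝ) = (((2^m-1)^d:ℕ):ℝ) - ((∏ ℓ, s ℓ : ℕ):ℝ) :=
    Nat.cast_sub haN_le
  have hsplit : ((((2^m-1)^d : ℕ)):ℝ)^n = ((((2^m-1)^d : ℕ)):ℝ)^(n-k) * ((((2^m-1)^d : ℕ)):ℝ)^k := by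
    rw [← pow_add]
    congr 1
    omega
  have hnn : n - (n-k) = k := by omega
  rw [hnn, Nat.choose_symm hkn'] at hBadcard
  have hfk : (0:ℝ) < (Nat.factorial k : ℝ) := by exact_mod_cast Nat.factorial_pos k
  have hfk1 : (0:ℝ) < (Nat.factorial (k-1) : ℝ) := by exact_mod_cast Nat.factorial_pos (k-1)
  have hhalf : (n:ℝ)/2 ≤ ((n-k:ℕ):ℝ) := by
    rw [Nat.cast_sub hkn']
    have h1 : (2*k:ℝ) < (2:ℝ)*n - 2*k := by
      have : ((2*k:ℕ):ℝ) < (n:ℝ) := by exact_mod_cast hkn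
      push_cast at this
      linarith
    linarith
  have hqnk : (n:ℝ)/2^(m+4) ≤ ((n-k:ℕ):ℝ) * q := by
    have h1 : (n:ℝ)/2 * (1/2^(m+3)) ≤ ((n-k:ℕ):ℝ) * q :=
      mul_le_mul hhalf hq1 (by positivity) (by positivity)
    calc (n:ℝ)/2^(m+4) = (n:ℝ)/2 * (1/2^(m+3)) := by
          rw [pow_succ]
          ring
    _ ≤ _ := h1
  have hexp_bound : (1 - q)^(n-k) ≤ Real.exp (-(n:ℝ)/2^(m+4)) := by
    have h1 : 1 - q ≤ Real.exp (-q) := by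
      have := Real.add_one_le_exp (-q); linarith
    calc (1-q)^(n-k) ≤ (Real.exp (-q))^(n-k) := pow_le_pow_left₀ (by linarith) h1 _
    _ = Real.exp (((n-k:ℕ):ℝ) * (-q)) := (Real.exp_nat_mul _ _).symm
    _ ≤ Real.exp (-(n:ℝ)/2^(m+4)) := by
        apply Real.exp_le_exp.2
        rw [neg_div]
        linarith [hqnk]
  have hchoose : ((n.choose k:ℕ):ℝ) ≤ (n:ℝ)^k / (Nat.factorial k) := by
    have h := Nat.choose_le_pow_div (α := ℝ) k n
    exact_mod_cast h
  have cancel : ∀ (c X Y : ℝ), 0 < Y → (c * (X^(n-k) * Y^k)) / (Y^(n-k) * Y^k) = c * (X/Y)^(n-k) := by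
    intro c X Y hY
    rw [div_pow]
    field_simp
  calc (Bad.card:ℝ) / (Tot.card:ℝ)
      ≤ ((n.choose k * (((2^m-1)^d - ∏ ℓ, s ℓ)^(n-k) * ((2^m-1)^d)^k) : ℕ):ℝ) / (Tot.card:ℝ) := by
        gcongr
  _ = ((n.choose k:ℕ):ℝ) * ((((((2^m-1)^d:ℕ)):ℝ) - ((∏ ℓ, s ℓ : ℕ):ℝ))/((((2^m-1)^d:ℕ)):ℝ))^(n-k) := by
        rw [hTotcard, Nat.cast_pow, hsplit, Nat.cast_mul, Nat.cast_mul, Nat.cast_pow,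
          Nat.cast_pow, hcast_sub]
        exact cancel _ _ _ hNdR_pos
  _ = ((n.choose k:ℕ):ℝ) * (1 - q)^(n-k) := by
        have hBpos : (0:ℝ) < ((2:ℝ)^m - 1)^d := hNdR ▸ hNdR_pos
        congr 2
        rw [hqdef, hNdR, haNR, sub_div, div_self (ne_of_gt hBpos)]
  _ ≤ ((n:ℝ)^k / (Nat.factorial k)) * Real.exp (-(n:ℝ)/2^(m+4)) := by
        apply mul_le_mul hchoose hexp_bound (pow_nonneg (by linarith) _) (by positivity)
  _ ≤ 2 * (n:ℝ)^k / (Nat.factorial (k-1)) * Real.exp (-(n:ℝ)/2^(m+4)) := by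
        apply mul_le_mul_of_nonneg_right _ (Real.exp_nonneg _)
        rw [div_le_div_iff₀ hfk hfk1]
        have h1 : ((Nat.factorial (k-1)):ℝ) ≤ ((Nat.factorial k):ℝ) := by
          exact_mod_cast Nat.factorial_le (by omega : k - 1 ≤ k)
        have h2 : (0:ℝ) ≤ (n:ℝ)^k := by positivity
        nlinarith [mul_le_mul_of_nonneg_left h1 h2]
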